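/- Poincaré–Miranda theorem: Let f = (f_1,…,f_n) : [−a,a]^n → ℝ^n be continuous, and suppose that for each i, f_i ≤ 0 on the face {x_i = −a} and f_i ≥ 0 on the face {x_i = a}. Then there exists x ∈ [−a,a]^n with f(x) = 0. -/

import Mathlib

open Finset
namespace PM


lemma even_card_of_invol {α : Type*} [DecidableEq α] (s : Finset α) (g : α → α)
    (hmem : ∀ a ∈ s, g a ∈ s) (hinv : ∀ a ∈ s, g (g a) = a) (hne : ∀ a ∈ s, g a ≠ a) :
    Even s.card := by
  classical
  induction s using Finset.strongInduction with
  | _ s ih =>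
    rcases s.eq_empty_or_nonempty with rfl | ⟨a, ha⟩
    · simp
    · have hga : g a ∈ s := hmem a ha
      have hga' : g a ≠ a := hne a ha
      set t := (s.erase a).erase (g a) with ht
      have htsub : t ⊂ s := by
        refine Finset.ssubset_iff_of_subset ?_ |>.mpr ⟨a, ha, by simp [ht]⟩
        exact (Finset.erase_subset _ _).trans (Finset.erase_subset _ _)
      have hmem_t : ∀ b ∈ t, b ∈ s := fun b hb => htsub.1 hb
      have hgt : ∀ b ∈ t, g b ∈ t := by
        intro b hb
        have hbs : b ∈ s := hmem_t b hb
        have hb1 : b ≠ g a := (Finset.ne_of_mem_erase hb)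
        have hb2 : b ≠ a := Finset.ne_of_mem_erase (Finset.mem_of_mem_erase hb)
        refine Finset.mem_erase.mpr ⟨?_, Finset.mem_erase.mpr ⟨?_, hmem b hbs⟩⟩
        · intro h; exact hb2 (by rw [← hinv b hbs, h, hinv a ha])
        · intro h; exact hb1 (by rw [← hinv b hbs, h])
      have hcard : s.card = t.card + 2 := by
        have h1 : (s.erase a).card = s.card - 1 := Finset.card_erase_of_mem ha
        have h2 : t.card = (s.erase a).card - 1 :=
          Finset.card_erase_of_mem (Finset.mem_erase.mpr ⟨hga', hga⟩)
        have : 1 ≤ s.card := Finset.card_pos.mpr ⟨a, ha⟩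
        have : 2 ≤ s.card := by
          have := Finset.one_lt_card.mpr ⟨a, ha, g a, hga, fun h => hga' h.symm⟩
          omega
        omega
      have := ih t htsub (fun b hb => hgt b hb)
        (fun b hb => hinv b (hmem_t b hb)) (fun b hb => hne b (hmem_t b hb))
      rw [hcard]
      rcases this with ⟨c, hc⟩
      exact ⟨c+1, by omega⟩

/-- Per-simplex door counting. -/
lemma doorcount {d : ℕ} (L : Fin (d + 1) → ℕ) (hL : ∀ k, L k ≤ d) :
    (((univ : Finset (Fin (d+1))).filter
        (fun k => ∀ m < d, ∃ j, j ≠ k ∧ L j = m)).card : ZMod 2)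
      = if (∀ m < d + 1, ∃ k, L k = m) then 1 else 0 := by
  classical
  by_cases hfull : ∀ m < d + 1, ∃ k, L k = m
  · rw [if_pos hfull]
    -- L is injective as a map to Fin (d+1)
    set L' : Fin (d+1) → Fin (d+1) := fun k => ⟨L k, Nat.lt_succ_of_le (hL k)⟩ with hL'
    have hsurj : Function.Surjective L' := by
      intro m
      obtain ⟨k, hk⟩ := hfull m.1 m.2
      exact ⟨k, by simp [hL', hk]⟩
    have hinj : Function.Injective L' := Finite.injective_iff_surjective.mpr hsurj
    have hinjL : ∀ j₁ j₂, L j₁ = L j₂ → j₁ = j₂ := by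
      intro j₁ j₂ h; exact hinj (by simp [hL', h])
    obtain ⟨k₀, hk₀⟩ := hfull d (Nat.lt_succ_self d)
    have : (univ : Finset (Fin (d+1))).filter
        (fun k => ∀ m < d, ∃ j, j ≠ k ∧ L j = m) = {k₀} := by
      ext k
      simp only [Finset.mem_filter, Finset.mem_univ, true_and, Finset.mem_singleton]
      constructor
      · intro hdoor
        by_contra hk
        have hLk : L k ≠ d := fun h => hk (hinjL _ _ (h.trans hk₀.symm))
        obtain ⟨j, hj, hjL⟩ := hdoor (L k) (lt_of_le_of_ne (hL k) hLk)
        exact hj (hinjL _ _ hjL)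
      · rintro rfl m hm
        obtain ⟨j, hj⟩ := hfull m (hm.trans (Nat.lt_succ_self d))
        exact ⟨j, fun h => by subst h; omega, hj⟩
    rw [this]; simp
  · rw [if_neg hfull]
    -- no label equals d in the relevant situation; show evenness via involution
    set s := (univ : Finset (Fin (d+1))).filter
        (fun k => ∀ m < d, ∃ j, j ≠ k ∧ L j = m) with hs
    have hnod : ∀ k ∈ s, ∀ j, L j ≠ d := by
      intro k hk j hj
      apply hfull
      intro m hm
      rcases Nat.lt_succ_iff_lt_or_eq.mp hm with hm' | rfl
      · obtain ⟨j', _, hj'⟩ := (Finset.mem_filter.mp hk).2 m hm'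
        exact ⟨j', hj'⟩
      · exact ⟨j, hj⟩
    -- injectivity off k for doors
    have hinjOn : ∀ k ∈ s, ∀ j₁ j₂, j₁ ≠ k → j₂ ≠ k → L j₁ = L j₂ → j₁ = j₂ := by
      intro k hk j₁ j₂ h1 h2 heq
      have hdoor := (Finset.mem_filter.mp hk).2
      have himage : ((univ : Finset (Fin (d+1))).erase k).image L = Finset.range d := by
        apply Finset.Subset.antisymm
        · intro m hm
          simp only [Finset.mem_image, Finset.mem_erase, Finset.mem_univ, and_true] at hm
          obtain ⟨j, hj, rfl⟩ := hm
          exact Finset.mem_range.mpr (lt_of_le_of_ne (hL j) (hnod k hk j))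
        · intro m hm
          obtain ⟨j, hj, hjL⟩ := hdoor m (Finset.mem_range.mp hm)
          exact Finset.mem_image.mpr ⟨j, by simp [hj], hjL⟩
      have hcard : (((univ : Finset (Fin (d+1))).erase k).image L).card
          = ((univ : Finset (Fin (d+1))).erase k).card := by
        rw [himage, Finset.card_range, Finset.card_erase_of_mem (Finset.mem_univ k)]
        simp
      have := Finset.injOn_of_card_image_eq hcard
      exact this (by simp [h1]) (by simp [h2]) heq
    have hdoorg : ∀ k ∈ s, ∃ j, j ≠ k ∧ L j = L k := by
      intro k hk
      have hdoor := (Finset.mem_filter.mp hk).2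
      exact hdoor (L k) (lt_of_le_of_ne (hL k) (hnod k hk k))
    set g : Fin (d+1) → Fin (d+1) := fun k =>
      if h : ∃ j, j ≠ k ∧ L j = L k then h.choose else k with hg
    have hgspec : ∀ k ∈ s, g k ≠ k ∧ L (g k) = L k := by
      intro k hk
      have h := hdoorg k hk
      simp only [hg, dif_pos h]
      exact ⟨h.choose_spec.1, h.choose_spec.2⟩
    have hgmem : ∀ k ∈ s, g k ∈ s := by
      intro k hk
      obtain ⟨hne, hLg⟩ := hgspec k hk
      refine Finset.mem_filter.mpr ⟨Finset.mem_univ _, ?_⟩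
      intro m hm
      by_cases hmk : m = L k
      · exact ⟨k, fun h => hne h.symm, hmk.symm⟩
      · obtain ⟨j, hj, hjL⟩ := (Finset.mem_filter.mp hk).2 m hm
        refine ⟨j, fun h => hmk ?_, hjL⟩
        rw [← hjL, h, hLg]
    have hginv : ∀ k ∈ s, g (g k) = k := by
      intro k hk
      obtain ⟨hne, hLg⟩ := hgspec k hk
      obtain ⟨hne2, hLg2⟩ := hgspec (g k) (hgmem k hk)
      -- hinjOn is about injectivity off k for k ∈ s; use k' := g k ∈ s
      exact hinjOn (g k) (hgmem k hk) (g (g k)) k hne2 (fun h => hne h.symm)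
        (by rw [hLg2, hLg])
    have : Even s.card := even_card_of_invol s g hgmem hginv (fun k hk => (hgspec k hk).1)
    obtain ⟨c, hc⟩ := this
    rw [hc]
    have h2 : ((c + c : ℕ) : ZMod 2) = 2 * (c : ZMod 2) := by push_cast; ring
    rw [h2, show (2 : ZMod 2) = 0 from rfl, zero_mul]



variable {d N : ℕ}

/-- Vertex `k` of the Kuhn simplex `(c, π)`. -/
def ver (c : Fin d → Fin N) (π : Equiv.Perm (Fin d)) (k : Fin (d+1)) : Fin d → ℕ :=
  fun i => (c i : ℕ) + if ((π.symm i : Fin d) : ℕ) < (k : ℕ) then 1 else 0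

lemma ver_le (c : Fin d → Fin N) (π : Equiv.Perm (Fin d)) (k : Fin (d+1)) (i : Fin d) :
    ver c π k i ≤ N := by
  have := (c i).isLt
  unfold ver; split <;> omega

def door (ℓ : (Fin d → ℕ) → ℕ) (c : Fin d → Fin N) (π : Equiv.Perm (Fin d))
    (k : Fin (d+1)) : Prop :=
  ∀ m < d, ∃ j, j ≠ k ∧ ℓ (ver c π j) = m

def full (ℓ : (Fin d → ℕ) → ℕ) (c : Fin d → Fin N) (π : Equiv.Perm (Fin d)) : Prop :=
  ∀ m < d + 1, ∃ k, ℓ (ver c π k) = m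

instance (ℓ : (Fin d → ℕ) → ℕ) (c : Fin d → Fin N) (π : Equiv.Perm (Fin d)) (k : Fin (d+1)) :
    Decidable (door ℓ c π k) := by unfold door; infer_instance

instance (ℓ : (Fin d → ℕ) → ℕ) (c : Fin d → Fin N) (π : Equiv.Perm (Fin d)) :
    Decidable (full ℓ c π) := by unfold full; infer_instance

lemma DtoF (ℓ : (Fin d → ℕ) → ℕ) (hub : ∀ p, (∀ i, p i ≤ N) → ℓ p ≤ d) :
    ((univ.filter (fun x : ((Fin d → Fin N) × Equiv.Perm (Fin d)) × Fin (d+1) =>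
        door ℓ x.1.1 x.1.2 x.2)).card : ZMod 2)
      = ((univ.filter (fun x : (Fin d → Fin N) × Equiv.Perm (Fin d) =>
          full ℓ x.1 x.2)).card : ZMod 2) := by
  classical
  rw [Finset.card_filter, Finset.card_filter]
  push_cast
  rw [Fintype.sum_prod_type]
  have key : ∀ a : (Fin d → Fin N) × Equiv.Perm (Fin d),
      (∑ k : Fin (d+1), if door ℓ a.1 a.2 k then (1 : ZMod 2) else 0)
        = if full ℓ a.1 a.2 then 1 else 0 := by
    intro a
    have hL : ∀ k, ℓ (ver a.1 a.2 k) ≤ d := fun k => hub _ (ver_le _ _ _)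
    have := doorcount (fun k => ℓ (ver a.1 a.2 k)) hL
    rw [Finset.card_filter] at this
    push_cast at this
    exact this.trans (by rfl)
  calc (∑ a : (Fin d → Fin N) × Equiv.Perm (Fin d), ∑ k : Fin (d+1),
          if door ℓ a.1 a.2 k then (1 : ZMod 2) else 0)
      = ∑ a : (Fin d → Fin N) × Equiv.Perm (Fin d),
          (if full ℓ a.1 a.2 then (1 : ZMod 2) else 0) := by
        exact Finset.sum_congr rfl (fun a _ => key a)
    _ = _ := Finset.sum_congr rfl (fun x _ => if_congr Iff.rfl rfl rfl)


/-- increase coordinate `i₀` by one (mod N, junk when at top). -/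
def bump (c : Fin d → Fin N) (i₀ : Fin d) : Fin d → Fin N :=
  Function.update c i₀ ⟨((c i₀ : ℕ) + 1) % N, Nat.mod_lt _ (Nat.zero_lt_of_lt (c i₀).isLt)⟩

def dump (c : Fin d → Fin N) (i₀ : Fin d) : Fin d → Fin N :=
  Function.update c i₀ ⟨(c i₀ : ℕ) - 1, lt_of_le_of_lt (Nat.sub_le _ _) (c i₀).isLt⟩

lemma bump_same (c : Fin d → Fin N) (i₀ : Fin d) (h : (c i₀ : ℕ) + 1 < N) :
    ((bump c i₀ i₀ : Fin N) : ℕ) = (c i₀ : ℕ) + 1 := by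
  simp [bump, Nat.mod_eq_of_lt h]

lemma bump_other (c : Fin d → Fin N) (i₀ i : Fin d) (h : i ≠ i₀) :
    bump c i₀ i = c i := Function.update_of_ne h _ _

lemma dump_same (c : Fin d → Fin N) (i₀ : Fin d) :
    ((dump c i₀ i₀ : Fin N) : ℕ) = (c i₀ : ℕ) - 1 := by simp [dump]

lemma dump_other (c : Fin d → Fin N) (i₀ i : Fin d) (h : i ≠ i₀) :
    dump c i₀ i = c i := Function.update_of_ne h _ _

lemma dump_bump (c : Fin d → Fin N) (i₀ : Fin d) (h : (c i₀ : ℕ) + 1 < N) :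
    dump (bump c i₀) i₀ = c := by
  funext i
  by_cases hi : i = i₀
  · rw [hi]
    apply Fin.ext
    rw [dump_same, bump_same _ _ h]
    omega
  · rw [dump_other _ _ _ hi, bump_other _ _ _ hi]

lemma bump_dump (c : Fin d → Fin N) (i₀ : Fin d) (h : 0 < (c i₀ : ℕ)) :
    bump (dump c i₀) i₀ = c := by
  funext i
  by_cases hi : i = i₀
  · rw [hi]
    apply Fin.ext
    rw [bump_same, dump_same]
    · omega
    · rw [dump_same]; have := (c i₀).isLt; omega
  · rw [bump_other _ _ _ hi, dump_other _ _ _ hi]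

lemma rot_symm_val (y : Fin (m+1)) :
    (((finRotate (m+1)).symm y : Fin (m+1)) : ℕ) = if (y : ℕ) = 0 then m else (y : ℕ) - 1 := by
  set z := (finRotate (m+1)).symm y with hz
  have hy : y = finRotate (m+1) z := by rw [hz, Equiv.apply_symm_apply]
  have hval : (y : ℕ) = ((z : ℕ) + 1) % (m+1) := by
    rw [hy, finRotate_succ_apply]
    rw [Fin.add_def]
    simp [Fin.val_one']
  have hzlt := z.isLt
  rcases Nat.lt_or_ge (z : ℕ) m with h | h
  · rw [Nat.mod_eq_of_lt (by omega)] at hval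
    rw [if_neg (by omega)]
    omega
  · have hzm : (z : ℕ) = m := by omega
    rw [hzm] at hval
    simp at hval
    rw [if_pos (by simp [hval])]
    omega

lemma rot_val (y : Fin (m+1)) (h : (y : ℕ) < m) :
    ((finRotate (m+1) y : Fin (m+1)) : ℕ) = (y : ℕ) + 1 := by
  rw [finRotate_succ_apply, Fin.add_def]
  simp [Fin.val_one']
  omega

lemma rot_last : finRotate (m+1) ⟨m, Nat.lt_succ_self m⟩ = 0 := by
  rw [finRotate_succ_apply]
  apply Fin.ext
  rw [Fin.add_def]
  simp [Fin.val_one']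

/-- Swap lemma: facet vertices unchanged. -/
lemma ver_swap (c : Fin d → Fin N) (π : Equiv.Perm (Fin d)) (k : Fin (d+1))
    (h0 : (k : ℕ) ≠ 0) (hd : (k : ℕ) ≠ d) (j : Fin (d+1)) (hj : j ≠ k) :
    ver c (π * Equiv.swap (⟨(k : ℕ) - 1, by have := k.isLt; omega⟩ : Fin d)
      (⟨(k : ℕ), by have := k.isLt; omega⟩ : Fin d)) j = ver c π j := by
  funext i
  set a : Fin d := ⟨(k : ℕ) - 1, by have := k.isLt; omega⟩
  set b : Fin d := ⟨(k : ℕ), by have := k.isLt; omega⟩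
  unfold ver
  congr 1
  have hsymm : (π * Equiv.swap a b).symm i = Equiv.swap a b (π.symm i) := by
    simp [mul_comm, Equiv.Perm.mul_def, Equiv.symm_swap]
  rw [hsymm]
  have hjk : (j : ℕ) ≠ (k : ℕ) := fun h => hj (Fin.ext h)
  rcases eq_or_ne (π.symm i) a with h | h
  · rw [h, Equiv.swap_apply_left]
    simp only [a, b]
    congr 1
    simp only [eq_iff_iff]
    omega
  rcases eq_or_ne (π.symm i) b with h2 | h2
  · rw [h2, Equiv.swap_apply_right]
    simp only [a, b]
    congr 1
    simp only [eq_iff_iff]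
    have : ((π.symm i : Fin d) : ℕ) = (k : ℕ) := by rw [h2]
    omega
  · rw [Equiv.swap_apply_of_ne_of_ne h h2]

/-- Rotation lemma: vertex `j` of the rotated simplex is vertex `j+1` of the original. -/
lemma ver_rot (c : Fin (m+1) → Fin N) (π : Equiv.Perm (Fin (m+1)))
    (hc : (c (π 0) : ℕ) + 1 < N) (j : Fin (m+2)) (hj : (j : ℕ) < m + 1) :
    ver (bump c (π 0)) (π * finRotate (m+1)) j = ver c π (j + 1) := by
  funext i
  have hj1 : ((j + 1 : Fin (m+2)) : ℕ) = (j : ℕ) + 1 := by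
    rw [Fin.add_def]
    simp [Fin.val_one']
    omega
  have hsymm : ((π * finRotate (m+1)).symm i : ℕ)
      = if ((π.symm i : Fin (m+1)) : ℕ) = 0 then m else ((π.symm i : Fin (m+1)) : ℕ) - 1 := by
    have : (π * finRotate (m+1)).symm i = (finRotate (m+1)).symm (π.symm i) := by
      simp [Equiv.Perm.mul_def]
    rw [this, rot_symm_val]
  unfold ver
  rcases eq_or_ne ((π.symm i : Fin (m+1)) : ℕ) 0 with h0 | h0
  · have hi : i = π 0 := by
      have : π.symm i = 0 := Fin.ext h0
      rw [← this, Equiv.apply_symm_apply]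
    rw [hsymm, h0, hj1, hi, bump_same _ _ hc]
    have h1 : ¬ (m < (j : ℕ)) := by omega
    have h2 : (0 : ℕ) < (j : ℕ) + 1 := by omega
    simp only [if_true]
    rw [if_neg h1, if_pos h2]
  · have hi : i ≠ π 0 := by
      intro h; apply h0; rw [h]; simp
    rw [hsymm, if_neg h0, hj1, bump_other _ _ _ hi]
    congr 1
    have hiff : ((((π.symm i : Fin (m+1)) : ℕ)) - 1 < (j : ℕ))
        ↔ (((π.symm i : Fin (m+1)) : ℕ) < (j : ℕ) + 1) := by omega
    rw [if_congr hiff rfl rfl]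


/-- Extend a permutation of `Fin m` to `Fin (m+1)` fixing the last element. -/
def pext (π' : Equiv.Perm (Fin m)) : Equiv.Perm (Fin (m+1)) where
  toFun := Fin.snoc (fun j => (π' j).castSucc) (Fin.last m)
  invFun := Fin.snoc (fun j => (π'.symm j).castSucc) (Fin.last m)
  left_inv := by
    intro i
    cases i using Fin.lastCases with
    | last => simp
    | cast j => simp
  right_inv := by
    intro i
    cases i using Fin.lastCases with
    | last => simp
    | cast j => simp

@[simp] lemma pext_castSucc (π' : Equiv.Perm (Fin m)) (j : Fin m) :
    pext π' j.castSucc = (π' j).castSucc := by simp [pext]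

@[simp] lemma pext_last (π' : Equiv.Perm (Fin m)) :
    pext π' (Fin.last m) = Fin.last m := by simp [pext]

@[simp] lemma pext_symm_castSucc (π' : Equiv.Perm (Fin m)) (j : Fin m) :
    (pext π').symm j.castSucc = (π'.symm j).castSucc := by
  rw [Equiv.symm_apply_eq, pext_castSucc, Equiv.apply_symm_apply]

@[simp] lemma pext_symm_last (π' : Equiv.Perm (Fin m)) :
    (pext π').symm (Fin.last m) = Fin.last m := by
  rw [Equiv.symm_apply_eq, pext_last]

/-- Restrict a permutation of `Fin (m+1)` fixing the last element. -/
def restr (π : Equiv.Perm (Fin (m+1))) (h : π (Fin.last m) = Fin.last m) :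
    Equiv.Perm (Fin m) where
  toFun j := (π j.castSucc).castPred (by
    intro he
    have : (j.castSucc : Fin (m+1)) = Fin.last m := π.injective (he.trans h.symm)
    exact (Fin.castSucc_lt_last j).ne this)
  invFun j := (π.symm j.castSucc).castPred (by
    intro he
    have h' : π.symm (Fin.last m) = Fin.last m :=
      (Equiv.symm_apply_eq π).mpr h.symm
    have : (j.castSucc : Fin (m+1)) = Fin.last m := π.symm.injective (he.trans h'.symm)
    exact (Fin.castSucc_lt_last j).ne this)
  left_inv := by intro j; simp
  right_inv := by intro j; simp

lemma pext_restr (π : Equiv.Perm (Fin (m+1))) (h : π (Fin.last m) = Fin.last m) :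
    pext (restr π h) = π := by
  apply Equiv.ext
  intro i
  cases i using Fin.lastCases with
  | last => rw [pext_last, h]
  | cast j => rw [pext_castSucc]; simp [restr]

lemma restr_pext (π' : Equiv.Perm (Fin m)) :
    restr (pext π') (pext_last π') = π' := by
  apply Equiv.ext
  intro j
  apply Fin.castSucc_injective
  simp [restr]

lemma ver_snoc (c' : Fin m → Fin N) (hN : 0 < N) (π' : Equiv.Perm (Fin m)) (j : Fin (m+1)) :
    ver (Fin.snoc c' (⟨0, hN⟩ : Fin N)) (pext π') j.castSucc
      = Fin.snoc (ver c' π' j) 0 := by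
  funext i
  cases i using Fin.lastCases with
  | last =>
    unfold ver
    rw [pext_symm_last]
    simp only [Fin.snoc_last]
    rw [if_neg (by simp [Fin.le_last, Fin.val_last]; omega)]
  | cast i' =>
    unfold ver
    rw [pext_symm_castSucc]
    simp only [Fin.snoc_castSucc]
    rfl



variable {m : ℕ}

lemma flast_ne_zero : (Fin.last (m+1) : Fin (m+2)) ≠ 0 := by
  intro h
  have := congrArg Fin.val h
  simp [Fin.val_last] at this

lemma door_bump_valid (ℓ : (Fin (m+1) → ℕ) → ℕ)
    (hhigh : ∀ p, (∀ i, p i ≤ N) → ∀ i : Fin (m+1), p i = N → ℓ p ≠ (i : ℕ))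
    (c : Fin (m+1) → Fin N) (π : Equiv.Perm (Fin (m+1)))
    (hdoor : door ℓ c π 0) : (c (π 0) : ℕ) + 1 < N := by
  by_contra hcon
  have hlt := (c (π 0)).isLt
  obtain ⟨j, hj, hjl⟩ := hdoor ((π 0 : Fin (m+1)) : ℕ) (π 0).isLt
  have hjpos : 0 < (j : ℕ) := by
    rcases Nat.eq_zero_or_pos (j : ℕ) with h | h
    · exact absurd (Fin.ext (h.trans (Fin.val_zero _).symm)) hj
    · exact h
  have hval : ver c π j (π 0) = N := by
    unfold ver
    simp only [Equiv.symm_apply_apply]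
    rw [if_pos (by simpa using hjpos)]
    omega
  exact hhigh (ver c π j) (fun i => ver_le c π j i) (π 0) hval hjl

lemma door_last_pi (ℓ : (Fin (m+1) → ℕ) → ℕ)
    (hlow : ∀ p, (∀ i, p i ≤ N) → ∀ i : Fin (m+1), p i = 0 → ℓ p ≤ (i : ℕ))
    (c : Fin (m+1) → Fin N) (π : Equiv.Perm (Fin (m+1)))
    (hdoor : door ℓ c π (Fin.last (m+1)))
    (hc0 : (c (π (Fin.last m)) : ℕ) = 0) : π (Fin.last m) = Fin.last m := by
  obtain ⟨j, hj, hjl⟩ := hdoor m (by omega)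
  have hjlt := j.isLt
  have hjv : (j : ℕ) ≤ m := by
    have : (j : ℕ) ≠ m + 1 := by
      intro h; exact hj (Fin.ext (by simp [Fin.val_last, h]))
    omega
  have hcoord : ver c π j (π (Fin.last m)) = 0 := by
    unfold ver
    simp only [Equiv.symm_apply_apply]
    rw [if_neg (by simp [Fin.val_last]; omega)]
    omega
  have hle := hlow (ver c π j) (fun i => ver_le c π j i) (π (Fin.last m)) hcoord
  rw [hjl] at hle
  have := (π (Fin.last m)).isLt
  apply Fin.ext
  simp only [Fin.val_last]
  omega


lemma rot_last' : finRotate (m+1) (Fin.last m) = 0 := rot_last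

lemma door_rot (ℓ : (Fin (m+1) → ℕ) → ℕ) (c : Fin (m+1) → Fin N)
    (π : Equiv.Perm (Fin (m+1))) (hc : (c (π 0) : ℕ) + 1 < N)
    (hdoor : door ℓ c π 0) :
    door ℓ (bump c (π 0)) (π * finRotate (m+1)) (Fin.last (m+1)) := by
  intro m' hm'
  obtain ⟨j, hj, hjl⟩ := hdoor m' hm'
  have hjlt := j.isLt
  have hjpos : 0 < (j : ℕ) := by
    rcases Nat.eq_zero_or_pos (j : ℕ) with h | h
    · exact absurd (Fin.ext (h.trans (Fin.val_zero _).symm)) hj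
    · exact h
  set j' : Fin (m+2) := ⟨(j : ℕ) - 1, by omega⟩ with hj'
  refine ⟨j', ?_, ?_⟩
  · intro h
    have := congrArg Fin.val h
    simp only [hj', Fin.val_last] at this
    omega
  · rw [ver_rot c π hc j' (by simp [hj']; omega)]
    have heq : (j' + 1 : Fin (m+2)) = j := by
      apply Fin.ext
      rw [Fin.val_add_one_of_lt (by rw [Fin.lt_def]; simp [hj', Fin.val_last]; omega)]
      simp [hj']
      omega
    rw [heq]
    exact hjl

lemma door_unrot (ℓ : (Fin (m+1) → ℕ) → ℕ) (c : Fin (m+1) → Fin N)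
    (π : Equiv.Perm (Fin (m+1))) (hcpos : 0 < (c (π (Fin.last m)) : ℕ))
    (hdoor : door ℓ c π (Fin.last (m+1))) :
    door ℓ (dump c (π (Fin.last m))) (π * (finRotate (m+1))⁻¹) 0 := by
  have hrotinv : (finRotate (m+1))⁻¹ 0 = Fin.last m := by
    rw [Equiv.Perm.inv_def, Equiv.symm_apply_eq]
    exact rot_last'.symm
  have hπ0 : (π * (finRotate (m+1))⁻¹) 0 = π (Fin.last m) := by
    rw [Equiv.Perm.mul_apply, hrotinv]
  have hval : (dump c (π (Fin.last m)) ((π * (finRotate (m+1))⁻¹) 0) : ℕ) + 1 < N := by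
    rw [hπ0, dump_same]
    have := (c (π (Fin.last m))).isLt
    omega
  have hbump : bump (dump c (π (Fin.last m))) ((π * (finRotate (m+1))⁻¹) 0) = c := by
    rw [hπ0]; exact bump_dump c _ hcpos
  have hmul : (π * (finRotate (m+1))⁻¹) * finRotate (m+1) = π := inv_mul_cancel_right π _
  have key : ∀ j : Fin (m+2), (j : ℕ) < m + 1 →
      ver c π j = ver (dump c (π (Fin.last m))) (π * (finRotate (m+1))⁻¹) (j + 1) := by
    intro j hj
    have h2 := ver_rot (dump c (π (Fin.last m))) (π * (finRotate (m+1))⁻¹) hval j hj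
    rw [hbump, hmul] at h2
    exact h2
  intro m' hm'
  obtain ⟨j, hj, hjl⟩ := hdoor m' hm'
  have hjlt := j.isLt
  have hjv : (j : ℕ) ≤ m := by
    have : (j : ℕ) ≠ m + 1 := by
      intro h; exact hj (Fin.ext (by simp [Fin.val_last, h]))
    omega
  refine ⟨j + 1, ?_, ?_⟩
  · intro h
    have hv := congrArg Fin.val h
    rw [Fin.val_add_one_of_lt (by rw [Fin.lt_def]; simp [Fin.val_last]; omega)] at hv
    simp at hv
  · rw [← key j (by omega)]
    exact hjl

lemma door_swap (ℓ : (Fin (m+1) → ℕ) → ℕ) (c : Fin (m+1) → Fin N)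
    (π : Equiv.Perm (Fin (m+1))) (k : Fin (m+2))
    (h0 : (k : ℕ) ≠ 0) (hd : (k : ℕ) ≠ m + 1)
    (hdoor : door ℓ c π k) :
    door ℓ c (π * Equiv.swap (⟨(k : ℕ) - 1, by have := k.isLt; omega⟩ : Fin (m+1))
      (⟨(k : ℕ), by have := k.isLt; omega⟩ : Fin (m+1))) k := by
  intro m' hm'
  obtain ⟨j, hj, hjl⟩ := hdoor m' hm'
  exact ⟨j, hj, by rw [ver_swap c π k h0 hd j hj]; exact hjl⟩

/-- The pairing map on door incidences. -/
def gmap (x : ((Fin (m+1) → Fin N) × Equiv.Perm (Fin (m+1))) × Fin (m+2)) :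
    ((Fin (m+1) → Fin N) × Equiv.Perm (Fin (m+1))) × Fin (m+2) :=
  if _ : x.2 = 0 then ((bump x.1.1 (x.1.2 0), x.1.2 * finRotate (m+1)), Fin.last (m+1))
  else if _ : x.2 = Fin.last (m+1) then
    ((dump x.1.1 (x.1.2 (Fin.last m)), x.1.2 * (finRotate (m+1))⁻¹), 0)
  else ((x.1.1, x.1.2 * Equiv.swap
      (⟨(x.2 : ℕ) - 1, by have := x.2.isLt; omega⟩ : Fin (m+1))
      (⟨(x.2 : ℕ), by
        have h1 := x.2.isLt
        have h2 : (x.2 : ℕ) ≠ m + 1 := by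
          rename_i hl
          intro hh; exact hl (Fin.ext (by simp [Fin.val_last, hh]))
        omega⟩ : Fin (m+1))), x.2)

lemma gmap_zero (x : ((Fin (m+1) → Fin N) × Equiv.Perm (Fin (m+1))) × Fin (m+2))
    (h : x.2 = 0) :
    gmap x = ((bump x.1.1 (x.1.2 0), x.1.2 * finRotate (m+1)), Fin.last (m+1)) := by
  unfold gmap; rw [dif_pos h]

lemma gmap_last (x : ((Fin (m+1) → Fin N) × Equiv.Perm (Fin (m+1))) × Fin (m+2))
    (h0 : x.2 ≠ 0) (hl : x.2 = Fin.last (m+1)) :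
    gmap x = ((dump x.1.1 (x.1.2 (Fin.last m)), x.1.2 * (finRotate (m+1))⁻¹), 0) := by
  unfold gmap; rw [dif_neg h0, dif_pos hl]

lemma gmap_mid (x : ((Fin (m+1) → Fin N) × Equiv.Perm (Fin (m+1))) × Fin (m+2))
    (h0 : x.2 ≠ 0) (hl : x.2 ≠ Fin.last (m+1)) :
    gmap x = ((x.1.1, x.1.2 * Equiv.swap
      (⟨(x.2 : ℕ) - 1, by have := x.2.isLt; omega⟩ : Fin (m+1))
      (⟨(x.2 : ℕ), by
        have h1 := x.2.isLt
        have h2 : (x.2 : ℕ) ≠ m + 1 := fun hh => hl (Fin.ext (by simp [Fin.val_last, hh]))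
        omega⟩ : Fin (m+1))), x.2) := by
  unfold gmap; rw [dif_neg h0, dif_neg hl]

lemma DtoB (ℓ : (Fin (m+1) → ℕ) → ℕ)
    (hhigh : ∀ p, (∀ i, p i ≤ N) → ∀ i : Fin (m+1), p i = N → ℓ p ≠ (i : ℕ)) :
    ((univ.filter (fun x : ((Fin (m+1) → Fin N) × Equiv.Perm (Fin (m+1))) × Fin (m+2) =>
        door ℓ x.1.1 x.1.2 x.2)).card : ZMod 2)
    = ((univ.filter (fun x : ((Fin (m+1) → Fin N) × Equiv.Perm (Fin (m+1))) × Fin (m+2) =>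
        door ℓ x.1.1 x.1.2 x.2 ∧ x.2 = Fin.last (m+1)
          ∧ (x.1.1 (x.1.2 (Fin.last m)) : ℕ) = 0)).card : ZMod 2) := by
  classical
  set Q : ((Fin (m+1) → Fin N) × Equiv.Perm (Fin (m+1))) × Fin (m+2) → Prop :=
    fun x => x.2 = Fin.last (m+1) ∧ (x.1.1 (x.1.2 (Fin.last m)) : ℕ) = 0 with hQ
  have hsplit :
      (univ.filter (fun x => door ℓ x.1.1 x.1.2 x.2 ∧ Q x)).card
        + (univ.filter (fun x => door ℓ x.1.1 x.1.2 x.2 ∧ ¬ Q x)).card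
      = (univ.filter (fun x : ((Fin (m+1) → Fin N) × Equiv.Perm (Fin (m+1))) × Fin (m+2) =>
          door ℓ x.1.1 x.1.2 x.2)).card := by
    have h1 := Finset.card_filter_add_card_filter_not
      (s := (univ : Finset (((Fin (m+1) → Fin N) × Equiv.Perm (Fin (m+1))) × Fin (m+2))).filter
        (fun x => door ℓ x.1.1 x.1.2 x.2)) (p := Q)
    rw [Finset.filter_filter, Finset.filter_filter] at h1
    exact h1
  have heven : Even (univ.filter (fun x => door ℓ x.1.1 x.1.2 x.2 ∧ ¬ Q x)).card := by
    apply even_card_of_invol _ gmap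
    · -- membership
      rintro ⟨⟨c, π⟩, k⟩ hx
      obtain ⟨-, hdoor, hnq⟩ := Finset.mem_filter.mp hx
      refine Finset.mem_filter.mpr ⟨Finset.mem_univ _, ?_⟩
      by_cases h0 : k = 0
      · subst h0
        rw [gmap_zero ((c, π), 0) rfl]
        have hcv := door_bump_valid ℓ hhigh c π hdoor
        refine ⟨door_rot ℓ c π hcv hdoor, ?_⟩
        rintro ⟨-, hv⟩
        simp only at hv
        rw [Equiv.Perm.mul_apply, rot_last', bump_same _ _ hcv] at hv
        omega
      · by_cases hl : k = Fin.last (m+1)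
        · subst hl
          have hcpos : 0 < (c (π (Fin.last m)) : ℕ) := by
            rcases Nat.eq_zero_or_pos (c (π (Fin.last m)) : ℕ) with h | h
            · exact absurd ⟨rfl, h⟩ hnq
            · exact h
          rw [gmap_last ((c, π), Fin.last (m+1)) h0 rfl]
          refine ⟨door_unrot ℓ c π hcpos hdoor, ?_⟩
          rintro ⟨hv, -⟩
          exact flast_ne_zero hv.symm
        · rw [gmap_mid ((c, π), k) h0 hl]
          have hkv0 : (k : ℕ) ≠ 0 := fun h => h0 (Fin.ext (by simpa using h))
          have hkvl : (k : ℕ) ≠ m + 1 := fun h => hl (Fin.ext (by simp [Fin.val_last, h]))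
          refine ⟨door_swap ℓ c π k hkv0 hkvl hdoor, ?_⟩
          rintro ⟨hv, -⟩
          exact hl hv
    · -- involution
      rintro ⟨⟨c, π⟩, k⟩ hx
      obtain ⟨-, hdoor, hnq⟩ := Finset.mem_filter.mp hx
      by_cases h0 : k = 0
      · subst h0
        have hcv := door_bump_valid ℓ hhigh c π hdoor
        rw [gmap_zero ((c, π), 0) rfl,
          gmap_last ((bump c (π 0), π * finRotate (m+1)), Fin.last (m+1)) flast_ne_zero rfl]
        simp only
        rw [Equiv.Perm.mul_apply, rot_last', dump_bump _ _ hcv, mul_inv_cancel_right]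
      · by_cases hl : k = Fin.last (m+1)
        · subst hl
          have hcpos : 0 < (c (π (Fin.last m)) : ℕ) := by
            rcases Nat.eq_zero_or_pos (c (π (Fin.last m)) : ℕ) with h | h
            · exact absurd ⟨rfl, h⟩ hnq
            · exact h
          have hrotinv : (finRotate (m+1))⁻¹ 0 = Fin.last m := by
            rw [Equiv.Perm.inv_def, Equiv.symm_apply_eq]
            exact rot_last'.symm
          rw [gmap_last ((c, π), Fin.last (m+1)) h0 rfl,
            gmap_zero ((dump c (π (Fin.last m)), π * (finRotate (m+1))⁻¹), 0) rfl]
          simp only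
          rw [Equiv.Perm.mul_apply, hrotinv, bump_dump _ _ hcpos, inv_mul_cancel_right]
        · rw [gmap_mid ((c, π), k) h0 hl]
          rw [gmap_mid _ h0 hl]
          simp only
          rw [mul_assoc, Equiv.swap_mul_self, mul_one]
    · -- no fixed point
      rintro ⟨⟨c, π⟩, k⟩ hx
      by_cases h0 : k = 0
      · subst h0
        rw [gmap_zero ((c, π), 0) rfl]
        intro h
        exact flast_ne_zero (congrArg Prod.snd h)
      · by_cases hl : k = Fin.last (m+1)
        · subst hl
          rw [gmap_last ((c, π), Fin.last (m+1)) h0 rfl]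
          intro h
          exact flast_ne_zero (congrArg Prod.snd h).symm
        · rw [gmap_mid ((c, π), k) h0 hl]
          intro h
          have hπ : π * Equiv.swap
              (⟨(k : ℕ) - 1, by have := k.isLt; omega⟩ : Fin (m+1))
              (⟨(k : ℕ), by
                have h1 := k.isLt
                have h2 : (k : ℕ) ≠ m + 1 := fun hh => hl (Fin.ext (by simp [Fin.val_last, hh]))
                omega⟩ : Fin (m+1)) = π := by
            have := congrArg (fun y => y.1.2) h
            simpa using this
          have hσ := mul_left_cancel (a := π) (hπ.trans (mul_one π).symm)
          rw [Equiv.swap_eq_one_iff] at hσ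
          have hv := congrArg Fin.val hσ
          simp only at hv
          have hkv0 : (k : ℕ) ≠ 0 := fun hh => h0 (Fin.ext (by simpa using hh))
          omega
  obtain ⟨t, ht⟩ := heven
  rw [← hsplit, ht]
  simp only [hQ]
  push_cast
  rw [show ((t : ZMod 2) + t) = 2 * t by ring, show (2 : ZMod 2) = 0 from rfl, zero_mul, add_zero]

lemma ver_face (hN : 0 < N) (c : Fin (m+1) → Fin N) (π : Equiv.Perm (Fin (m+1)))
    (hπ : π (Fin.last m) = Fin.last m) (hcl : (c (Fin.last m) : ℕ) = 0) (j₀ : Fin (m+1)) :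
    Fin.snoc (ver (fun i' => c i'.castSucc) (restr π hπ) j₀) 0 = ver c π j₀.castSucc := by
  have hc : c = Fin.snoc (fun i' => c i'.castSucc) (⟨0, hN⟩ : Fin N) := by
    funext i
    cases i using Fin.lastCases with
    | last => rw [Fin.snoc_last]; exact Fin.ext hcl
    | cast i' => rw [Fin.snoc_castSucc]
  conv_rhs => rw [hc, ← pext_restr π hπ]
  rw [ver_snoc _ hN]

lemma BtoF (hN : 0 < N) (ℓ : (Fin (m+1) → ℕ) → ℕ)
    (hlow : ∀ p, (∀ i, p i ≤ N) → ∀ i : Fin (m+1), p i = 0 → ℓ p ≤ (i : ℕ)) :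
    (univ.filter (fun x : ((Fin (m+1) → Fin N) × Equiv.Perm (Fin (m+1))) × Fin (m+2) =>
        door ℓ x.1.1 x.1.2 x.2 ∧ x.2 = Fin.last (m+1)
          ∧ (x.1.1 (x.1.2 (Fin.last m)) : ℕ) = 0)).card
    = (univ.filter (fun y : (Fin m → Fin N) × Equiv.Perm (Fin m) =>
        full (fun p' => ℓ (Fin.snoc p' 0)) y.1 y.2)).card := by
  classical
  refine Finset.card_bij'
    (i := fun x hx => (fun i' => x.1.1 i'.castSucc,
      restr x.1.2 (door_last_pi ℓ hlow x.1.1 x.1.2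
        (by
          have h := (Finset.mem_filter.mp hx).2
          have := h.2.1
          rw [← this]; exact h.1)
        (Finset.mem_filter.mp hx).2.2.2)))
    (j := fun y _ => ((Fin.snoc y.1 (⟨0, hN⟩ : Fin N), pext y.2), Fin.last (m+1)))
    ?_ ?_ ?_ ?_
  · -- i maps into F'
    rintro ⟨⟨c, π⟩, k⟩ hx
    obtain ⟨-, hdoor, hkl, hc0⟩ := Finset.mem_filter.mp hx
    simp only at hdoor hkl hc0 ⊢
    subst hkl
    have hπ : π (Fin.last m) = Fin.last m := door_last_pi ℓ hlow c π hdoor hc0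
    have hcl : (c (Fin.last m) : ℕ) = 0 := by rw [hπ] at hc0; exact hc0
    refine Finset.mem_filter.mpr ⟨Finset.mem_univ _, ?_⟩
    intro m' hm'
    obtain ⟨j, hj, hjl⟩ := hdoor m' hm'
    have hjv : (j : ℕ) < m + 1 := by
      have := j.isLt
      have : (j : ℕ) ≠ m + 1 := fun h => hj (Fin.ext (by simp [Fin.val_last, h]))
      omega
    refine ⟨⟨(j : ℕ), hjv⟩, ?_⟩
    have hcs : (⟨(j : ℕ), hjv⟩ : Fin (m+1)).castSucc = j := by
      apply Fin.ext; simp [Fin.coe_castSucc]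
    have := ver_face hN c π hπ hcl ⟨(j : ℕ), hjv⟩
    rw [hcs] at this
    rw [show (fun p' => ℓ (Fin.snoc p' 0)) (ver (fun i' => c i'.castSucc)
        (restr π (door_last_pi ℓ hlow c π hdoor hc0)) ⟨(j : ℕ), hjv⟩)
      = ℓ (Fin.snoc (ver (fun i' => c i'.castSucc)
        (restr π (door_last_pi ℓ hlow c π hdoor hc0)) ⟨(j : ℕ), hjv⟩) 0) from rfl]
    rw [this]
    exact hjl
  · -- j maps into B
    rintro ⟨c', π'⟩ hy
    have hfull := (Finset.mem_filter.mp hy).2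
    refine Finset.mem_filter.mpr ⟨Finset.mem_univ _, ?_, rfl, ?_⟩
    · intro m' hm'
      obtain ⟨k₀, hk₀⟩ := hfull m' hm'
      refine ⟨k₀.castSucc, ?_, ?_⟩
      · intro h
        exact (Fin.castSucc_lt_last k₀).ne h
      · rw [ver_snoc c' hN π' k₀]
        exact hk₀
    · simp only [pext_last, Fin.snoc_last]
  · -- left inverse
    rintro ⟨⟨c, π⟩, k⟩ hx
    obtain ⟨-, hdoor, hkl, hc0⟩ := Finset.mem_filter.mp hx
    simp only at hdoor hkl hc0
    have hπ : π (Fin.last m) = Fin.last m := by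
      subst hkl
      exact door_last_pi ℓ hlow c π hdoor hc0
    have hcl : (c (Fin.last m) : ℕ) = 0 := by rw [hπ] at hc0; exact hc0
    simp only
    refine Prod.ext (Prod.ext ?_ ?_) ?_
    · show Fin.snoc (fun i' => c i'.castSucc) (⟨0, hN⟩ : Fin N) = c
      funext i
      cases i using Fin.lastCases with
      | last => rw [Fin.snoc_last]; exact (Fin.ext hcl).symm
      | cast i' => rw [Fin.snoc_castSucc]
    · show pext (restr π _) = π
      exact pext_restr π _
    · exact hkl.symm
  · -- right inverse
    rintro ⟨c', π'⟩ hy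
    dsimp only
    congr 1
    · funext i'
      rw [Fin.snoc_castSucc]
    · exact restr_pext π'

theorem kuhn : ∀ (d N : ℕ), 0 < N → ∀ (ℓ : (Fin d → ℕ) → ℕ),
    (∀ p, (∀ i, p i ≤ N) → ℓ p ≤ d) →
    (∀ p, (∀ i, p i ≤ N) → ∀ i : Fin d, p i = 0 → ℓ p ≤ (i : ℕ)) →
    (∀ p, (∀ i, p i ≤ N) → ∀ i : Fin d, p i = N → ℓ p ≠ (i : ℕ)) →
    ((univ.filter (fun y : (Fin d → Fin N) × Equiv.Perm (Fin d) =>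
        full ℓ y.1 y.2)).card : ZMod 2) = 1 := by
  intro d
  induction d with
  | zero =>
    intro N hN ℓ hub hlow hhigh
    have hall : ∀ y : (Fin 0 → Fin N) × Equiv.Perm (Fin 0), full ℓ y.1 y.2 := by
      intro y m' hm'
      interval_cases m'
      refine ⟨0, ?_⟩
      have := hub (ver y.1 y.2 0) (fun i => ver_le _ _ _ _)
      omega
    rw [Finset.filter_true_of_mem (fun y _ => hall y), Finset.card_univ]
    rw [Fintype.card_prod, Fintype.card_perm]
    simp
  | succ m ih =>
    intro N hN ℓ hub hlow hhigh
    have hsnoc_valid : ∀ p' : Fin m → ℕ, (∀ i, p' i ≤ N) →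
        (∀ i, (Fin.snoc p' 0 : Fin (m+1) → ℕ) i ≤ N) := by
      intro p' hp' i
      cases i using Fin.lastCases with
      | last => rw [Fin.snoc_last]; omega
      | cast i' => rw [Fin.snoc_castSucc]; exact hp' i'
    have hub' : ∀ p', (∀ i, p' i ≤ N) → (fun p' => ℓ (Fin.snoc p' 0)) p' ≤ m := by
      intro p' hp'
      have := hlow (Fin.snoc p' 0) (hsnoc_valid p' hp') (Fin.last m) (Fin.snoc_last _ _)
      simpa [Fin.val_last] using this
    have hlow' : ∀ p', (∀ i, p' i ≤ N) → ∀ i : Fin m, p' i = 0 →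
        (fun p' => ℓ (Fin.snoc p' 0)) p' ≤ (i : ℕ) := by
      intro p' hp' i hi
      have := hlow (Fin.snoc p' 0) (hsnoc_valid p' hp') i.castSucc
        (by rw [Fin.snoc_castSucc]; exact hi)
      simpa using this
    have hhigh' : ∀ p', (∀ i, p' i ≤ N) → ∀ i : Fin m, p' i = N →
        (fun p' => ℓ (Fin.snoc p' 0)) p' ≠ (i : ℕ) := by
      intro p' hp' i hi
      have := hhigh (Fin.snoc p' 0) (hsnoc_valid p' hp') i.castSucc
        (by rw [Fin.snoc_castSucc]; exact hi)
      simpa using this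
    calc ((univ.filter (fun y : (Fin (m+1) → Fin N) × Equiv.Perm (Fin (m+1)) =>
            full ℓ y.1 y.2)).card : ZMod 2)
        = ((univ.filter (fun x : ((Fin (m+1) → Fin N) × Equiv.Perm (Fin (m+1))) × Fin (m+2) =>
            door ℓ x.1.1 x.1.2 x.2)).card : ZMod 2) := (DtoF ℓ hub).symm
      _ = ((univ.filter (fun x : ((Fin (m+1) → Fin N) × Equiv.Perm (Fin (m+1))) × Fin (m+2) =>
            door ℓ x.1.1 x.1.2 x.2 ∧ x.2 = Fin.last (m+1)
              ∧ (x.1.1 (x.1.2 (Fin.last m)) : ℕ) = 0)).card : ZMod 2) := DtoB ℓ hhigh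
      _ = ((univ.filter (fun y : (Fin m → Fin N) × Equiv.Perm (Fin m) =>
            full (fun p' => ℓ (Fin.snoc p' 0)) y.1 y.2)).card : ZMod 2) := by
            rw [BtoF hN ℓ hlow]
      _ = 1 := ih N hN (fun p' => ℓ (Fin.snoc p' 0)) hub' hlow' hhigh'

theorem kuhn_exists (d N : ℕ) (hN : 0 < N) (ℓ : (Fin d → ℕ) → ℕ)
    (hub : ∀ p, (∀ i, p i ≤ N) → ℓ p ≤ d)
    (hlow : ∀ p, (∀ i, p i ≤ N) → ∀ i : Fin d, p i = 0 → ℓ p ≤ (i : ℕ))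
    (hhigh : ∀ p, (∀ i, p i ≤ N) → ∀ i : Fin d, p i = N → ℓ p ≠ (i : ℕ)) :
    ∃ (c : Fin d → Fin N) (π : Equiv.Perm (Fin d)), full ℓ c π := by
  classical
  have h1 := kuhn d N hN ℓ hub hlow hhigh
  by_contra hcon
  push_neg at hcon
  have : (univ.filter (fun y : (Fin d → Fin N) × Equiv.Perm (Fin d) =>
      full ℓ y.1 y.2)) = ∅ := by
    apply Finset.filter_false_of_mem
    rintro ⟨c, π⟩ -
    exact hcon c π
  rw [this] at h1
  simp at h1

-- test analytic part standalone, assuming kuhn-provided discrete data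
theorem approx (n : ℕ) (a : ℝ) (ha : 0 < a)
    (f : (Fin n → ℝ) → (Fin n → ℝ))
    (S : Set (Fin n → ℝ)) (hS : S = Set.Icc (fun _ => -a) (fun _ => a))
    (hf : ContinuousOn f S)
    (H : ∀ k : ℕ, ∃ y, ∃ z : Fin n → (Fin n → ℝ), y ∈ S ∧ (∀ i, 0 ≤ f y i) ∧
      ∀ i, z i ∈ S ∧ f (z i) i ≤ 0 ∧ dist y (z i) ≤ 2 * a / (k + 1)) :
    ∃ x ∈ S, f x = 0 := by
  choose y z hyS hy0 hz using H
  have hScompact : IsCompact S := by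
    rw [hS]; exact isCompact_Icc
  obtain ⟨x, hxS, φ, hφmono, hφtend⟩ := hScompact.tendsto_subseq hyS
  -- limits
  have hdiv : Filter.Tendsto (fun k : ℕ => 2 * a / ((k : ℝ) + 1)) Filter.atTop (nhds 0) := by
    have h1 : Filter.Tendsto (fun k : ℕ => ((k : ℝ) + 1)) Filter.atTop Filter.atTop :=
      Filter.tendsto_atTop_add_const_right _ 1 tendsto_natCast_atTop_atTop
    exact Filter.Tendsto.div_atTop tendsto_const_nhds h1
  have hdivφ : Filter.Tendsto (fun k : ℕ => 2 * a / ((φ k : ℝ) + 1)) Filter.atTop (nhds 0) := by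
    apply squeeze_zero (fun k => by positivity) (g := fun k : ℕ => 2 * a / ((k : ℝ) + 1))
    · intro k
      apply div_le_div_of_nonneg_left (by linarith) (by positivity)
      have h2 : k ≤ φ k := hφmono.le_apply
      have h3 : (k : ℝ) ≤ (φ k : ℝ) := Nat.cast_le.mpr h2
      linarith
    · exact hdiv
  have hyx : Filter.Tendsto (fun k => y (φ k)) Filter.atTop (nhds x) := hφtend
  have hfyx : Filter.Tendsto (fun k => f (y (φ k))) Filter.atTop (nhds (f x)) := by
    apply (hf x hxS).tendsto.comp
    rw [tendsto_nhdsWithin_iff]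
    exact ⟨hyx, Filter.Eventually.of_forall (fun k => hyS (φ k))⟩
  refine ⟨x, hxS, ?_⟩
  funext i
  have hge : 0 ≤ f x i := by
    have := (tendsto_pi_nhds.mp hfyx) i
    exact ge_of_tendsto this (Filter.Eventually.of_forall (fun k => hy0 (φ k) i))
  have hle : f x i ≤ 0 := by
    have hzx : Filter.Tendsto (fun k => z (φ k) i) Filter.atTop (nhds x) := by
      rw [tendsto_iff_dist_tendsto_zero]
      apply squeeze_zero (fun k => dist_nonneg)
        (g := fun k => dist (y (φ k)) (z (φ k) i) + dist (y (φ k)) x)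
      · intro k
        calc dist (z (φ k) i) x ≤ dist (z (φ k) i) (y (φ k)) + dist (y (φ k)) x :=
              dist_triangle _ _ _
          _ = dist (y (φ k)) (z (φ k) i) + dist (y (φ k)) x := by rw [dist_comm]
      · have h1 : Filter.Tendsto (fun k => dist (y (φ k)) (z (φ k) i))
            Filter.atTop (nhds 0) := by
          apply squeeze_zero (fun k => dist_nonneg) (fun k => (hz (φ k) i).2.2)
          exact hdivφ
        have h2 : Filter.Tendsto (fun k => dist (y (φ k)) x) Filter.atTop (nhds 0) :=
          tendsto_iff_dist_tendsto_zero.mp hyx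
        simpa using h1.add h2
    have hfzx : Filter.Tendsto (fun k => f (z (φ k) i)) Filter.atTop (nhds (f x)) := by
      apply (hf x hxS).tendsto.comp
      rw [tendsto_nhdsWithin_iff]
      exact ⟨hzx, Filter.Eventually.of_forall (fun k => (hz (φ k) i).1)⟩
    have := (tendsto_pi_nhds.mp hfzx) i
    exact le_of_tendsto this (Filter.Eventually.of_forall (fun k => (hz (φ k) i).2.1))
  have : f x i = 0 := le_antisymm hle hge
  simpa using this


theorem discrete_step (n : ℕ) (a : ℝ) (ha : 0 < a)
    (f : (Fin n → ℝ) → (Fin n → ℝ))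
    (S : Set (Fin n → ℝ)) (hS : S = Set.Icc (fun _ => -a) (fun _ => a))
    (hlowf : ∀ i : Fin n, ∀ x ∈ S, x i = -a → f x i ≤ 0)
    (hhighf : ∀ i : Fin n, ∀ x ∈ S, x i = a → 0 ≤ f x i)
    (k : ℕ) :
    ∃ y, ∃ z : Fin n → (Fin n → ℝ), y ∈ S ∧ (∀ i, 0 ≤ f y i) ∧
      ∀ i, z i ∈ S ∧ f (z i) i ≤ 0 ∧ dist y (z i) ≤ 2 * a / (k + 1) := by
  classical
  subst hS
  set N : ℕ := k + 1 with hNdef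
  have hN : 0 < N := Nat.succ_pos k
  have hNR : (0 : ℝ) < (N : ℝ) := by positivity
  set emb : (Fin n → ℕ) → (Fin n → ℝ) :=
    fun p i => -a + 2 * a * ((p i : ℝ) / (N : ℝ)) with hemb
  have hembS : ∀ p : Fin n → ℕ, (∀ i, p i ≤ N) → emb p ∈ Set.Icc (fun _ => -a) (fun _ => a) := by
    intro p hp
    constructor <;> intro i <;> simp only [hemb]
    · have h1 : (0 : ℝ) ≤ (p i : ℝ) / N := by positivity
      nlinarith
    · have h2 : ((p i : ℝ) / N) ≤ 1 := by
        rw [div_le_one hNR]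
        exact_mod_cast hp i
      nlinarith
  have hemb0 : ∀ (p : Fin n → ℕ) (i : Fin n), p i = 0 → emb p i = -a := by
    intro p i h
    simp [hemb, h]
  have hembN : ∀ (p : Fin n → ℕ) (i : Fin n), p i = N → emb p i = a := by
    intro p i h
    simp only [hemb, h]
    rw [div_self (ne_of_gt hNR)]
    ring
  set sprop : (Fin n → ℕ) → Fin n → Prop :=
    fun p i => p i = N ∨ 0 < f (emb p) i with hsprop
  set ℓ : (Fin n → ℕ) → ℕ :=
    fun p => if h : ∃ t : ℕ, ∃ ht : t < n, ¬ sprop p ⟨t, ht⟩ then Nat.find h else n with hℓ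
  have hub : ∀ p, (∀ i, p i ≤ N) → ℓ p ≤ n := by
    intro p _
    simp only [hℓ]
    split
    · rename_i h
      obtain ⟨ht, -⟩ := Nat.find_spec h
      omega
    · exact le_refl n
  have hlow : ∀ p, (∀ i, p i ≤ N) → ∀ i : Fin n, p i = 0 → ℓ p ≤ (i : ℕ) := by
    intro p hp i hpi
    have hns : ¬ sprop p i := by
      simp only [hsprop]
      push_neg
      refine ⟨by omega, ?_⟩
      have hle := hlowf i (emb p) (hembS p hp) (hemb0 p i hpi)
      linarith
    have hpred : ∃ ht : (i : ℕ) < n, ¬ sprop p ⟨(i : ℕ), ht⟩ := ⟨i.isLt, hns⟩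
    have hex : ∃ t : ℕ, ∃ ht : t < n, ¬ sprop p ⟨t, ht⟩ := ⟨(i : ℕ), hpred⟩
    simp only [hℓ]
    rw [dif_pos hex]
    exact Nat.find_le hpred
  have hhigh : ∀ p, (∀ i, p i ≤ N) → ∀ i : Fin n, p i = N → ℓ p ≠ (i : ℕ) := by
    intro p _ i hpi heq
    simp only [hℓ] at heq
    split at heq
    · rename_i h
      obtain ⟨ht, hns⟩ := heq ▸ Nat.find_spec h
      exact hns (Or.inl hpi)
    · have := i.isLt; omega
  obtain ⟨c, π, hfull⟩ := kuhn_exists n N hN ℓ hub hlow hhigh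
  set w : Fin (n+1) → Fin n → ℕ := fun kk => ver c π kk with hw
  have hwval : ∀ kk, ∀ i, w kk i ≤ N := fun kk i => ver_le c π kk i
  have hwb : ∀ kk j, (c j : ℕ) ≤ w kk j ∧ w kk j ≤ (c j : ℕ) + 1 := by
    intro kk j
    simp only [hw]
    unfold ver
    split <;> omega
  obtain ⟨kstar, hkstar⟩ := hfull n (Nat.lt_succ_self n)
  have hsy : ∀ i : Fin n, sprop (w kstar) i := by
    intro i
    by_contra hns
    have hex : ∃ t : ℕ, ∃ ht : t < n, ¬ sprop (w kstar) ⟨t, ht⟩ := ⟨(i : ℕ), i.isLt, hns⟩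
    simp only [hℓ] at hkstar
    rw [dif_pos hex] at hkstar
    have hle : Nat.find hex ≤ (i : ℕ) := Nat.find_le ⟨i.isLt, hns⟩
    have := i.isLt
    omega
  have hy0 : ∀ i, 0 ≤ f (emb (w kstar)) i := by
    intro i
    rcases hsy i with h | h
    · exact hhighf i (emb (w kstar)) (hembS _ (hwval kstar)) (hembN _ i h)
    · linarith
  have hdistb : ∀ kk1 kk2, dist (emb (w kk1)) (emb (w kk2)) ≤ 2 * a / N := by
    intro kk1 kk2
    rw [dist_pi_le_iff (by positivity)]
    intro j
    have h1 := hwb kk1 j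
    have h2 := hwb kk2 j
    have habs : |(w kk1 j : ℝ) - (w kk2 j : ℝ)| ≤ 1 := by
      rw [abs_le]
      constructor
      · have : (w kk1 j : ℝ) ≥ (c j : ℕ) := by exact_mod_cast h1.1
        have : (w kk2 j : ℝ) ≤ (c j : ℕ) + 1 := by exact_mod_cast h2.2
        have h3 : ((c j : ℕ) : ℝ) ≤ (w kk1 j : ℝ) := by exact_mod_cast h1.1
        have h4 : (w kk2 j : ℝ) ≤ ((c j : ℕ) : ℝ) + 1 := by exact_mod_cast h2.2
        linarith
      · have h3 : (w kk1 j : ℝ) ≤ ((c j : ℕ) : ℝ) + 1 := by exact_mod_cast h1.2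
        have h4 : ((c j : ℕ) : ℝ) ≤ (w kk2 j : ℝ) := by exact_mod_cast h2.1
        linarith
    rw [Real.dist_eq]
    have heq : emb (w kk1) j - emb (w kk2) j
        = (2 * a / N) * ((w kk1 j : ℝ) - (w kk2 j : ℝ)) := by
      simp only [hemb]
      field_simp
      ring
    rw [heq, abs_mul, abs_of_nonneg (by positivity)]
    calc 2 * a / N * |(w kk1 j : ℝ) - (w kk2 j : ℝ)| ≤ 2 * a / N * 1 := by
          apply mul_le_mul_of_nonneg_left habs (by positivity)
      _ = 2 * a / N := mul_one _
  have hzex : ∀ i : Fin n, ∃ zi, zi ∈ Set.Icc (fun _ : Fin n => -a) (fun _ => a)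
      ∧ f zi i ≤ 0 ∧ dist (emb (w kstar)) zi ≤ 2 * a / (k + 1) := by
    intro i
    obtain ⟨ki, hki⟩ := hfull (i : ℕ) (lt_trans i.isLt (Nat.lt_succ_self n))
    have hns : ¬ sprop (w ki) i := by
      simp only [hℓ] at hki
      split at hki
      · rename_i h
        obtain ⟨ht, hns⟩ := hki ▸ Nat.find_spec h
        exact hns
      · have := i.isLt; omega
    have hfle : f (emb (w ki)) i ≤ 0 := by
      simp only [hsprop] at hns
      push_neg at hns
      linarith [hns.2]
    refine ⟨emb (w ki), hembS _ (hwval ki), hfle, ?_⟩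
    have := hdistb kstar ki
    have hcast : ((N : ℕ) : ℝ) = (k : ℝ) + 1 := by
      rw [hNdef]; push_cast; ring
    rwa [hcast] at this
  choose z hz1 hz2 hz3 using hzex
  exact ⟨emb (w kstar), z, hembS _ (hwval kstar), hy0, fun i => ⟨hz1 i, hz2 i, hz3 i⟩⟩


end PM

/-- Poincaré–Miranda theorem. -/
theorem stmt5 (n : ℕ) (a : ℝ) (ha : 0 < a)
    (f : (Fin n → ℝ) → (Fin n → ℝ))
    (S : Set (Fin n → ℝ)) (hS : S = Set.Icc (fun _ => -a) (fun _ => a))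
    (hf : ContinuousOn f S)
    (hlow : ∀ i : Fin n, ∀ x ∈ S, x i = -a → f x i ≤ 0)
    (hhigh : ∀ i : Fin n, ∀ x ∈ S, x i = a → 0 ≤ f x i) :
    ∃ x ∈ S, f x = 0 := by
  apply PM.approx n a ha f S hS hf
  intro k
  exact PM.discrete_step n a ha f S hS hlow hhigh k
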